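/- arXiv:0907.5424 — 3 statements merged into one kernel-verified Lean document; each statement's English description precedes it below -/
import Mathlib

section
/- Let I ⊆ ℝ be an interval and let H̄, δH, N : I → ℝ be differentiable with H̄'(φ) ≠ 0 on I. Suppose δH satisfies the linearized Hamilton–Jacobi equation H̄'(φ)·δH'(φ) = (3/2)·H̄(φ)·δH(φ) on I, and N satisfies N'(φ) = −H̄(φ)/(2H̄'(φ)). Then the function φ ↦ δH(φ)·exp(3N(φ)) is constant on I; equivalently δH(φ) = δH(φ_i)·exp(−3(N(φ) − N(φ_i))) for any φ_i, φ ∈ I, so perturbations of an inflationary solution decay exponentially with the number of e-folds (inflation is an attractor). -/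
/-- **Inflation is an attractor: linear perturbations decay as `e^(−3N)`.**
If on an interval `δH` solves the linearized Hamilton–Jacobi equation
`H̄' δH' = (3/2) H̄ δH` and the e-fold number satisfies `N' = −H̄/(2H̄')`, then
`δH · exp(3N)` is constant, i.e. `δH(φ) = δH(φᵢ) exp(−3(N(φ) − N(φᵢ)))`. -/
theorem inflationary_attractor
    (I : Set ℝ) (hI : Convex ℝ I)
    (Hb Hb' δH δH' N N' : ℝ → ℝ)
    (hHb : ∀ φ ∈ I, HasDerivAt Hb (Hb' φ) φ)
    (hδH : ∀ φ ∈ I, HasDerivAt δH (δH' φ) φ)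
    (hN : ∀ φ ∈ I, HasDerivAt N (N' φ) φ)
    (hne : ∀ φ ∈ I, Hb' φ ≠ 0)
    (hlin : ∀ φ ∈ I, Hb' φ * δH' φ = (3 / 2) * Hb φ * δH φ)
    (hNeq : ∀ φ ∈ I, N' φ = -(Hb φ / (2 * Hb' φ))) :
    ∀ φi ∈ I, ∀ φ ∈ I,
      δH φ * Real.exp (3 * N φ) = δH φi * Real.exp (3 * N φi) := by
  intro φi hφi φ hφ
  set f : ℝ → ℝ := fun x => δH x * Real.exp (3 * N x) with hf
  have hderiv : ∀ x ∈ I, HasDerivWithinAt f 0 I x := by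
    intro x hx
    have h1 : HasDerivAt (fun y => Real.exp (3 * N y))
        (Real.exp (3 * N x) * (3 * N' x)) x :=
      ((hN x hx).const_mul 3).exp
    have h2 : HasDerivAt f
        (δH' x * Real.exp (3 * N x) + δH x * (Real.exp (3 * N x) * (3 * N' x))) x :=
      (hδH x hx).mul h1
    have key : δH' x * Real.exp (3 * N x) + δH x * (Real.exp (3 * N x) * (3 * N' x)) = 0 := by
      have hN' := hNeq x hx
      have hlin' := hlin x hx
      have hb := hne x hx
      rw [hN']
      field_simp
      nlinarith [hlin', Real.exp_pos (3 * N x), mul_pos (Real.exp_pos (3 * N x)) (Real.exp_pos (3 * N x))]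
    rw [key] at h2
    exact h2.hasDerivWithinAt
  have := hI.norm_image_sub_le_of_norm_hasDerivWithin_le
    (fun x hx => (hderiv x hx).hasFDerivWithinAt) (C := 0)
    (fun x hx => by simp) hφi hφ
  have h0 : ‖f φ - f φi‖ ≤ 0 := by simpa using this
  have : f φ = f φi := by
    have := norm_sub_eq_zero_iff.mp (le_antisymm h0 (norm_nonneg _))
    exact this
  simpa [hf] using this
end

section
/- (Lyth bound.) Let N₁ < N₂ be real numbers, let φ : [N₁, N₂] → ℝ be continuously differentiable, and let r : [N₁, N₂] → ℝ satisfy (φ'(N))² = r(N)/8 for all N ∈ [N₁, N₂], with r(N) ≥ r₀ for some constant r₀ > 0. Then |φ(N₂) − φ(N₁)| ≥ (N₂ − N₁)·√(r₀/8). In particular (units M_pl = 1), if the tensor-to-scalar ratio satisfies r ≥ 0.01 throughout 60 e-folds, the total field excursion satisfies Δφ ≥ 60·√(0.01/8) > 1, i.e. it is super-Planckian. -/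
/-- **The Lyth bound (units `M_pl = 1`).**
If `(dφ/dN)² = r(N)/8` with `r(N) ≥ r₀ > 0` on `[N₁, N₂]` (with `φ` continuously
differentiable there), then `|Δφ| ≥ (N₂ − N₁)√(r₀/8)`. In particular, with `r ≥ 0.01`
over 60 e-folds the excursion is super-Planckian: `60·√(0.01/8) > 1`. -/
theorem lyth_bound (N₁ N₂ : ℝ) (hN : N₁ < N₂) (φ φ' r : ℝ → ℝ) (r₀ : ℝ) (hr₀ : 0 < r₀)
    (hφ : ∀ N ∈ Set.Icc N₁ N₂, HasDerivAt φ (φ' N) N)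
    (hφ'cont : ContinuousOn φ' (Set.Icc N₁ N₂))
    (hsq : ∀ N ∈ Set.Icc N₁ N₂, (φ' N) ^ 2 = r N / 8)
    (hge : ∀ N ∈ Set.Icc N₁ N₂, r₀ ≤ r N) :
    (N₂ - N₁) * Real.sqrt (r₀ / 8) ≤ |φ N₂ - φ N₁|
    ∧ (1 : ℝ) < 60 * Real.sqrt (0.01 / 8) := by
  have hle : N₁ ≤ N₂ := hN.le
  set c : ℝ := Real.sqrt (r₀ / 8) with hc
  have hcpos : 0 < c := Real.sqrt_pos.mpr (by linarith)
  -- pointwise |φ' N| ≥ c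
  have habs : ∀ N ∈ Set.Icc N₁ N₂, c ≤ |φ' N| := by
    intro N hNmem
    have h1 : |φ' N| = Real.sqrt (r N / 8) := by
      rw [← hsq N hNmem, Real.sqrt_sq_eq_abs]
    rw [h1]
    exact Real.sqrt_le_sqrt (by linarith [hge N hNmem])
  -- no zero of φ'
  have hnz : ∀ N ∈ Set.Icc N₁ N₂, φ' N ≠ 0 := by
    intro N hNmem h0
    have := habs N hNmem
    rw [h0, abs_zero] at this
    linarith
  -- FTC
  have hint : ∫ N in N₁..N₂, φ' N = φ N₂ - φ N₁ := by
    apply intervalIntegral.integral_eq_sub_of_hasDerivAt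
    · intro x hx
      rw [Set.uIcc_of_le hle] at hx
      exact hφ x hx
    · exact (hφ'cont.mono (by rw [Set.uIcc_of_le hle])).intervalIntegrable
  have hII : IntervalIntegrable φ' MeasureTheory.volume N₁ N₂ :=
    (hφ'cont.mono (by rw [Set.uIcc_of_le hle])).intervalIntegrable
  have hN₁mem : N₁ ∈ Set.Icc N₁ N₂ := Set.left_mem_Icc.mpr hle
  have hmain : (N₂ - N₁) * c ≤ |φ N₂ - φ N₁| := by
    rcases lt_or_gt_of_ne (hnz N₁ hN₁mem) with hneg | hpos
    · -- φ' ≤ -c everywhere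
      have hall : ∀ N ∈ Set.Icc N₁ N₂, φ' N ≤ -c := by
        intro N hNmem
        by_contra h
        push_neg at h
        have hNpos : 0 < φ' N := by
          rcases le_abs.mp (habs N hNmem) with h1 | h1
          · linarith
          · linarith
        -- IVT on [N₁, N]: φ' N₁ < 0 < φ' N
        have hsub : Set.Icc N₁ N ⊆ Set.Icc N₁ N₂ :=
          Set.Icc_subset_Icc le_rfl hNmem.2
        have := intermediate_value_Icc hNmem.1 (hφ'cont.mono hsub)
        have h0 : (0:ℝ) ∈ Set.Icc (φ' N₁) (φ' N) := ⟨hneg.le, hNpos.le⟩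
        obtain ⟨x, hx, hx0⟩ := this h0
        exact hnz x (hsub hx) hx0
      have hmono : ∫ N in N₁..N₂, φ' N ≤ ∫ N in N₁..N₂, (-c) := by
        apply intervalIntegral.integral_mono_on hle hII (intervalIntegrable_const)
        exact hall
      rw [hint, intervalIntegral.integral_const] at hmono
      simp only [smul_eq_mul] at hmono
      have : φ N₂ - φ N₁ ≤ -((N₂ - N₁) * c) := by linarith [hmono]
      calc (N₂ - N₁) * c ≤ -(φ N₂ - φ N₁) := by linarith
        _ ≤ |φ N₂ - φ N₁| := neg_le_abs _
    · -- φ' ≥ c everywhere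
      have hall : ∀ N ∈ Set.Icc N₁ N₂, c ≤ φ' N := by
        intro N hNmem
        by_contra h
        push_neg at h
        have hNneg : φ' N < 0 := by
          rcases le_abs.mp (habs N hNmem) with h1 | h1
          · linarith
          · linarith
        have hsub : Set.Icc N₁ N ⊆ Set.Icc N₁ N₂ :=
          Set.Icc_subset_Icc le_rfl hNmem.2
        have := intermediate_value_Icc' hNmem.1 (hφ'cont.mono hsub)
        have h0 : (0:ℝ) ∈ Set.Icc (φ' N) (φ' N₁) := ⟨hNneg.le, hpos.le⟩
        obtain ⟨x, hx, hx0⟩ := this h0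
        exact hnz x (hsub hx) hx0
      have hmono : ∫ N in N₁..N₂, (c:ℝ) ≤ ∫ N in N₁..N₂, φ' N := by
        apply intervalIntegral.integral_mono_on hle (intervalIntegrable_const) hII
        exact hall
      rw [hint, intervalIntegral.integral_const] at hmono
      simp only [smul_eq_mul] at hmono
      exact le_trans hmono (le_abs_self _)
  refine ⟨hmain, ?_⟩
  have h1 : (1/60 : ℝ) < Real.sqrt (0.01 / 8) := by
    rw [show (0.01/8 : ℝ) = 0.00125 by norm_num]
    have := Real.lt_sqrt (x := (1/60:ℝ)) (y := (0.00125:ℝ)) (by norm_num)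
    rw [this]
    norm_num
  linarith
end

section
/- (Field range bound for warped D-brane inflation.) Let g_s, α', r_UV, N, V₆, M_pl, Δφ be positive real numbers. Define the D3-brane tension T₃ = ((2π)³·g_s·α'²)^{−1} and the ten-dimensional gravitational coupling κ₁₀² = (1/2)·(2π)⁷·g_s²·α'⁴. Assume: (i) Δφ² < T₃·r_UV² (the canonical inflaton range is bounded by the throat length); (ii) M_pl² = V₆/κ₁₀² (dimensional reduction); and (iii) V₆ > 2π⁴·g_s·N·α'²·r_UV² (the compact volume exceeds the warped throat volume). Then Δφ/M_pl < 2/√N. -/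
/-- **Field range bound for warped D-brane inflation: `Δφ/M_pl < 2/√N`.**
With the D3-brane tension `T₃ = ((2π)³ g_s α'²)⁻¹` and `κ₁₀² = (1/2)(2π)⁷ g_s² α'⁴`,
if `Δφ² < T₃ r_UV²`, `M_pl² = V₆/κ₁₀²`, and `V₆ > 2π⁴ g_s N α'² r_UV²`, then
`Δφ/M_pl < 2/√N`. -/
theorem warped_brane_field_range_bound
    (gs α' rUV N V₆ Mpl Δφ T₃ κsq : ℝ)
    (hgs : 0 < gs) (hα' : 0 < α') (hrUV : 0 < rUV) (hN : 0 < N) (hV₆ : 0 < V₆)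
    (hMpl : 0 < Mpl) (hΔφ : 0 < Δφ)
    (hT₃ : T₃ = ((2 * Real.pi) ^ 3 * gs * α' ^ 2)⁻¹)
    (hκ : κsq = (1 / 2) * (2 * Real.pi) ^ 7 * gs ^ 2 * α' ^ 4)
    (h1 : Δφ ^ 2 < T₃ * rUV ^ 2)
    (h2 : Mpl ^ 2 = V₆ / κsq)
    (h3 : V₆ > 2 * Real.pi ^ 4 * gs * N * α' ^ 2 * rUV ^ 2) :
    Δφ / Mpl < 2 / Real.sqrt N := by
  have hπ := Real.pi_pos
  have hκpos : 0 < κsq := by rw [hκ]; positivity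
  have hT₃pos : 0 < T₃ := by rw [hT₃]; positivity
  -- key: Δφ² * N < 4 * Mpl²
  have hT : T₃ * rUV ^ 2 * N * κsq = 4 * (2 * Real.pi ^ 4 * gs * N * α' ^ 2 * rUV ^ 2) := by
    rw [hT₃, hκ]
    field_simp
    ring
  have hMsq : 4 * (2 * Real.pi ^ 4 * gs * N * α' ^ 2 * rUV ^ 2) < 4 * Mpl ^ 2 * κsq := by
    have : Mpl ^ 2 * κsq = V₆ := by rw [h2]; field_simp
    nlinarith
  have hkey : Δφ ^ 2 * N < 4 * Mpl ^ 2 := by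
    have h1' : Δφ ^ 2 * N * κsq < T₃ * rUV ^ 2 * N * κsq := by nlinarith [mul_pos (sub_pos.mpr h1) (mul_pos hN hκpos)]
    rw [hT] at h1'
    have := lt_trans h1' hMsq
    exact lt_of_mul_lt_mul_right this hκpos.le
  have hsN : 0 < Real.sqrt N := Real.sqrt_pos.mpr hN
  rw [div_lt_div_iff₀ hMpl hsN]
  have h2sq : (Δφ * Real.sqrt N) ^ 2 < (2 * Mpl) ^ 2 := by
    have : (Real.sqrt N) ^ 2 = N := Real.sq_sqrt hN.le
    nlinarith
  exact lt_of_pow_lt_pow_left₀ 2 (by positivity) h2sq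
end
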